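/- Let Q be a real quadratic form on a finite-dimensional vector space V, and α a nonzero linear functional on V with kernel K. If Q restricted to K is positive definite, then there exists c₀ > 0 such that for all c ≥ c₀, the quadratic form Q + c·α² is positive definite on all of V. -/

import Mathlib

open QuadraticMap LinearMap

/-- Cauchy–Schwarz-type inequality for the polar form on a subspace where `Q` is nonneg. -/
theorem aux_cs (V : Type*) [AddCommGroup V] [Module ℝ V]
    (Q : QuadraticForm ℝ V) (x y : V) (hx : 0 ≤ Q x) (hy : 0 ≤ Q y)
    (h : ∀ t : ℝ, 0 ≤ Q (x + t • y)) :
    (polar Q x y) ^ 2 ≤ 4 * Q x * Q y := by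
  have key : ∀ t : ℝ, 0 ≤ Q y * (t * t) + polar Q x y * t + Q x := by
    intro t
    have h1 := h t
    have hexp : Q (x + t • y) = Q x + (t * t) * Q y + t * polar Q x y := by
      have h2 : Q (x + t • y) = Q x + Q (t • y) + polar Q x (t • y) := by
        simp only [QuadraticMap.polar]; ring
      rw [h2, QuadraticMap.map_smul, polar_smul_right]
      simp only [smul_eq_mul]
    nlinarith [h1, hexp]
  have := discrim_le_zero key
  rw [discrim] at this
  nlinarith [this]

set_option maxHeartbeats 1000000 in
/-- If the quadratic form `Q` is positive definite on the kernel of a nonzero linear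
functional `α`, then `Q + c·α²` is positive definite on all of `V` for all
sufficiently large `c > 0`. -/
theorem stmt_14 (V : Type*) [AddCommGroup V] [Module ℝ V] [FiniteDimensional ℝ V]
    (Q : QuadraticForm ℝ V) (α : V →ₗ[ℝ] ℝ) (hα : α ≠ 0)
    (hQ : ∀ v ∈ LinearMap.ker α, v ≠ 0 → 0 < Q v) :
    ∃ c₀ > (0 : ℝ), ∀ c ≥ c₀, ∀ v : V, v ≠ 0 → 0 < Q v + c * (α v) ^ 2 := by
  classical
  -- pick w with α w = 1
  obtain ⟨v₀, hv₀⟩ : ∃ v, α v ≠ 0 := by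
    by_contra h
    push_neg at h
    exact hα (LinearMap.ext fun v => by simp [h v])
  set w : V := (α v₀)⁻¹ • v₀ with hw
  have hαw : α w = 1 := by
    simp [hw, inv_mul_cancel₀ hv₀]
  set K : Submodule ℝ V := LinearMap.ker α with hK
  have hQnonneg : ∀ z ∈ K, 0 ≤ Q z := by
    intro z hz
    rcases eq_or_ne z 0 with rfl | hz0
    · simp
    · exact (hQ z hz hz0).le
  -- bilinear form on K
  set b : LinearMap.BilinForm ℝ K := LinearMap.BilinForm.restrict (Q.polarBilin) K with hb
  have hbapp : ∀ x y : K, b x y = polar Q (x : V) (y : V) := fun x y => rfl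
  have hbself : ∀ x : K, b x x = 2 * Q (x : V) := by
    intro x
    rw [hbapp]
    have h2 : ((x : V) + x) = (2 : ℝ) • (x : V) := by rw [two_smul]
    simp only [QuadraticMap.polar, h2, QuadraticMap.map_smul, smul_eq_mul]
    ring
  have hbnd : b.Nondegenerate := by
    suffices hL : b.SeparatingLeft from
      ⟨hL, fun m hm => hL m fun y => by rw [hbapp, polar_comm, ← hbapp]; exact hm y⟩
    intro m hm
    have := hm m
    rw [hbself] at this
    by_contra hm0
    have hmV : (m : V) ≠ 0 := fun h => hm0 (Subtype.ext h)
    have := hQ (m : V) m.2 hmV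
    linarith
  -- Riesz representation of k ↦ polar Q w k on K
  set β : Module.Dual ℝ K := (Q.polarBilin w) ∘ₗ K.subtype with hβ
  set u : K := (b.toDual hbnd).symm β with hu
  have hurep : ∀ k : K, polar Q (u : V) (k : V) = polar Q w (k : V) := by
    intro k
    have := LinearMap.BilinForm.apply_toDual_symm_apply (B := b) (hB := hbnd) (f := β) (v := k)
    rw [hbapp] at this
    exact this
  have hQu : 0 ≤ Q (u : V) := hQnonneg _ u.2
  refine ⟨max 1 (Q (u : V) - Q w + 1), lt_of_lt_of_le one_pos (le_max_left _ _), ?_⟩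
  intro c hc v hv
  set t : ℝ := α v with ht
  set k : V := v - t • w with hk'
  have hkK : k ∈ K := by
    simp [hk', hK, LinearMap.mem_ker, _root_.map_sub, _root_.map_smul, hαw, ht, smul_eq_mul]
  have hQk : 0 ≤ Q k := hQnonneg k hkK
  have hdecomp : Q v = Q k + t ^ 2 * Q w + t * polar Q w k := by
    have : v = k + t • w := by simp [hk']
    rw [this]
    have h2 : Q (k + t • w) = Q k + Q (t • w) + polar Q k (t • w) := by
      simp only [QuadraticMap.polar]; ring
    rw [h2, QuadraticMap.map_smul, polar_smul_right]
    have hps : polar Q k w = polar Q w k := by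
      simp only [QuadraticMap.polar]
      rw [add_comm k w]
      ring
    simp only [smul_eq_mul, hps]
    ring
  rcases eq_or_ne t 0 with ht0 | ht0
  · have hvK : v ∈ K := by
      rw [hK, LinearMap.mem_ker, ← ht, ht0]
    have hpos := hQ v hvK hv
    rw [ht0]
    simpa using hpos
  · -- main case
    have hCS : (polar Q (u : V) k) ^ 2 ≤ 4 * Q (u : V) * Q k := by
      apply aux_cs V Q (u : V) k hQu hQk
      intro s
      exact hQnonneg _ (K.add_mem u.2 (K.smul_mem s hkK))
    have hrep : polar Q w k = polar Q (u : V) k := (hurep ⟨k, hkK⟩).symm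
    have hcge : c + Q w ≥ Q (u : V) + 1 := by
      have := le_trans (le_max_right 1 (Q (u : V) - Q w + 1)) hc
      linarith
    rw [hdecomp, hrep]
    have ht2 : 0 < t ^ 2 := by positivity
    set g : ℝ := polar Q (u : V) k with hg
    clear_value g
    clear_value t k
    have hS : 0 ≤ Q k + t ^ 2 * Q (u : V) :=
      add_nonneg hQk (mul_nonneg (sq_nonneg t) hQu)
    have key : -(Q k + t ^ 2 * Q (u : V)) ≤ t * g := by
      by_contra hcon
      push_neg at hcon
      have h1 : Q k + t ^ 2 * Q (u : V) < -(t * g) := by linarith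
      have h2 : (Q k + t ^ 2 * Q (u : V)) * (Q k + t ^ 2 * Q (u : V)) <
          (-(t * g)) * (-(t * g)) := mul_self_lt_mul_self hS h1
      nlinarith [mul_le_mul_of_nonneg_left hCS (sq_nonneg t),
        sq_nonneg (t ^ 2 * Q (u : V) - Q k)]
    nlinarith [key, ht2, hQk, hQu, hcge]
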